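/- Let S and A be finite nonempty sets, p : S × A × S → ℝ with p(j|i,a) ≥ 0 and Σ_{j∈S} p(j|i,a) = 1 for all (i,a), r : S × A → ℝ, 0 ≤ γ < 1, and N > 0. The modified Bellman operator U, (UQ)(i,a) = r(i,a) + γ·Σ_{j∈S} p(j|i,a)·(1/N)·log(Σ_{b∈A} e^{N·Q(j,b)}), has a unique fixed point Q' : S × A → ℝ satisfying Q' = UQ'. -/

import Mathlib

/-- The modified (log-sum-exp) Bellman operator `U`:
`(UQ)(i,a) = r(i,a) + γ·Σ_j p(j|i,a)·(1/N)·log(Σ_b e^{N·Q(j,b)})`. -/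
noncomputable def modBellmanU {S A : Type*} [Fintype S] [Fintype A]
    (p : S → A → S → ℝ) (r : S → A → ℝ) (γ N : ℝ) (Q : S → A → ℝ) : S → A → ℝ :=
  fun i a => r i a + γ * ∑ j, p i a j *
    ((1 / N) * Real.log (∑ b, Real.exp (N * Q j b)))

/-- one-sided log-sum-exp bound -/
lemma lse_le {A : Type*} [Fintype A] [Nonempty A] (N : ℝ) (hN : 0 < N)
    (f g : A → ℝ) (d : ℝ) (h : ∀ b, f b ≤ g b + d) :
    (1 / N) * Real.log (∑ b, Real.exp (N * f b))
      ≤ (1 / N) * Real.log (∑ b, Real.exp (N * g b)) + d := by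
  have hpos : (0:ℝ) < ∑ b, Real.exp (N * g b) :=
    Finset.sum_pos (fun b _ => Real.exp_pos _) Finset.univ_nonempty
  have hle : (∑ b, Real.exp (N * f b)) ≤ Real.exp (N * d) * ∑ b, Real.exp (N * g b) := by
    rw [Finset.mul_sum]
    refine Finset.sum_le_sum fun b _ => ?_
    rw [← Real.exp_add]
    exact Real.exp_le_exp.2 (by nlinarith [h b])
  have hlog : Real.log (∑ b, Real.exp (N * f b))
      ≤ N * d + Real.log (∑ b, Real.exp (N * g b)) := by
    calc Real.log (∑ b, Real.exp (N * f b))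
        ≤ Real.log (Real.exp (N * d) * ∑ b, Real.exp (N * g b)) :=
          Real.log_le_log (Finset.sum_pos (fun b _ => Real.exp_pos _) Finset.univ_nonempty) hle
      _ = N * d + Real.log (∑ b, Real.exp (N * g b)) := by
          rw [Real.log_mul (Real.exp_ne_zero _) (ne_of_gt hpos), Real.log_exp]
  have hN' : (0:ℝ) < 1 / N := by positivity
  have hmul := mul_le_mul_of_nonneg_left hlog (le_of_lt hN')
  rw [mul_add, ← mul_assoc, one_div_mul_cancel (ne_of_gt hN), one_mul] at hmul
  linarith

/-- The modified Bellman operator has a unique fixed point `Q' = UQ'`. -/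
theorem modBellmanU_exists_unique_fixedPoint {S A : Type*}
    [Fintype S] [Fintype A] [Nonempty S] [Nonempty A]
    (p : S → A → S → ℝ) (hp0 : ∀ i a j, 0 ≤ p i a j) (hp1 : ∀ i a, ∑ j, p i a j = 1)
    (r : S → A → ℝ) (γ : ℝ) (hγ0 : 0 ≤ γ) (hγ1 : γ < 1) (N : ℝ) (hN : 0 < N) :
    ∃! Q' : S → A → ℝ, modBellmanU p r γ N Q' = Q' := by
  set K : NNReal := ⟨γ, hγ0⟩ with hK
  have hK1 : K < 1 := by exact_mod_cast hγ1
  have hLip : LipschitzWith K (modBellmanU p r γ N) := by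
    apply LipschitzWith.of_dist_le_mul
    intro Q Q'
    set d := dist Q Q' with hd
    have hd0 : 0 ≤ d := dist_nonneg
    have hptw : ∀ j b, dist (Q j b) (Q' j b) ≤ d := fun j b =>
      (dist_le_pi_dist (Q j) (Q' j) b).trans (dist_le_pi_dist Q Q' j)
    -- log-sum-exp term bound
    have hL : ∀ j, |(1 / N) * Real.log (∑ b, Real.exp (N * Q j b))
        - (1 / N) * Real.log (∑ b, Real.exp (N * Q' j b))| ≤ d := by
      intro j
      rw [abs_sub_le_iff]
      constructor
      · have := lse_le N hN (Q j) (Q' j) d (fun b => by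
          have := hptw j b; rw [Real.dist_eq, abs_sub_le_iff] at this; linarith [this.1])
        linarith
      · have := lse_le N hN (Q' j) (Q j) d (fun b => by
          have := hptw j b; rw [Real.dist_eq, abs_sub_le_iff] at this; linarith [this.2])
        linarith
    have key : dist (modBellmanU p r γ N Q) (modBellmanU p r γ N Q') ≤ γ * d := by
      rw [dist_pi_le_iff (by positivity)]
      intro i
      rw [dist_pi_le_iff (by positivity)]
      intro a
      rw [Real.dist_eq]
      simp only [modBellmanU]
      have : r i a + γ * ∑ j, p i a j * ((1 / N) * Real.log (∑ b, Real.exp (N * Q j b)))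
          - (r i a + γ * ∑ j, p i a j * ((1 / N) * Real.log (∑ b, Real.exp (N * Q' j b))))
          = γ * ∑ j, p i a j * ((1 / N) * Real.log (∑ b, Real.exp (N * Q j b))
            - (1 / N) * Real.log (∑ b, Real.exp (N * Q' j b))) := by
        simp only [mul_sub, Finset.sum_sub_distrib]
        ring
      rw [this, abs_mul, abs_of_nonneg hγ0]
      refine mul_le_mul_of_nonneg_left ?_ hγ0
      calc |∑ j, p i a j * ((1 / N) * Real.log (∑ b, Real.exp (N * Q j b))
            - (1 / N) * Real.log (∑ b, Real.exp (N * Q' j b)))|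
          ≤ ∑ j, |p i a j * ((1 / N) * Real.log (∑ b, Real.exp (N * Q j b))
            - (1 / N) * Real.log (∑ b, Real.exp (N * Q' j b)))| :=
            Finset.abs_sum_le_sum_abs _ _
        _ ≤ ∑ j, p i a j * d := by
            refine Finset.sum_le_sum fun j _ => ?_
            rw [abs_mul, abs_of_nonneg (hp0 i a j)]
            exact mul_le_mul_of_nonneg_left (hL j) (hp0 i a j)
        _ = d := by rw [← Finset.sum_mul, hp1, one_mul]
    exact key
  have hC : ContractingWith K (modBellmanU p r γ N) := ⟨hK1, hLip⟩
  exact ⟨hC.fixedPoint, hC.fixedPoint_isFixedPt, fun Q hQ => hC.fixedPoint_unique hQ⟩
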